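/- arXiv:2408.10068 — 4 statements merged into one kernel-verified Lean document; each statement's English description precedes it below -/
import Mathlib

section
/- Let B be a probability measure on ℝ that has an analytic density in a neighborhood of x ∈ ℝ (i.e., B restricted to an open interval around x has a density extending to a holomorphic function on a complex neighborhood of x). Then the Stieltjes transform m_B is bounded on {z ∈ ℂ⁺ : |z - x| ≤ ε} for some ε > 0. -/
open MeasureTheory Complex

lemma aux_abs_log_le (w : ℂ) :
    ‖Complex.log w‖ ≤ |Real.log (‖w‖)| + Real.pi := by
  refine le_trans (Complex.norm_le_abs_re_add_abs_im _) ?_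
  rw [Complex.log_re, Complex.log_im]
  exact add_le_add le_rfl (Complex.abs_arg_le_pi w)

lemma aux_log_abs_bound {lo hi r : ℝ} (hlo : 0 < lo) (h1 : lo ≤ r) (h2 : r ≤ hi) :
    |Real.log r| ≤ |Real.log lo| + |Real.log hi| := by
  have hr : 0 < r := lt_of_lt_of_le hlo h1
  rw [abs_le]
  constructor
  · nlinarith [Real.log_le_log hlo h1, neg_abs_le (Real.log lo), abs_nonneg (Real.log hi)]
  · have := Real.log_le_log hr h2
    have := le_abs_self (Real.log hi)
    have := abs_nonneg (Real.log lo)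
    linarith

lemma aux_integral_inv (z : ℂ) (hz : 0 < z.im) (a b : ℝ) (hab : a ≤ b) :
    ∫ t in Set.Ioo a b, 1 / ((t:ℂ) - z) =
      Complex.log ((b:ℂ) - z) - Complex.log ((a:ℂ) - z) := by
  have hne : ∀ t : ℝ, (t:ℂ) - z ≠ 0 := by
    intro t h
    have h2 : ((t:ℂ) - z).im = 0 := by rw [h]; simp
    simp only [Complex.sub_im, Complex.ofReal_im, zero_sub, neg_eq_zero] at h2
    exact ne_of_gt hz h2
  have hcont : Continuous fun t : ℝ => 1 / ((t:ℂ) - z) := by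
    apply Continuous.div continuous_const (by continuity)
    exact fun t => hne t
  have h1 : ∫ t in Set.Ioo a b, 1 / ((t:ℂ) - z) = ∫ t in a..b, 1 / ((t:ℂ) - z) := by
    rw [intervalIntegral.integral_of_le hab, MeasureTheory.integral_Ioc_eq_integral_Ioo]
  rw [h1]
  refine intervalIntegral.integral_eq_sub_of_hasDerivAt
    (f := fun t : ℝ => Complex.log ((t:ℂ) - z)) (fun t _ => ?_)
    (hcont.intervalIntegrable a b)
  have hmem : ((t:ℂ) - z) ∈ Complex.slitPlane := by
    refine Or.inr ?_
    simp only [Complex.sub_im, Complex.ofReal_im, zero_sub, ne_eq, neg_eq_zero]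
    exact ne_of_gt hz
  have hinner : HasDerivAt (fun w : ℂ => w - z) 1 ((t:ℂ)) := (hasDerivAt_id _).sub_const z
  have := ((Complex.hasDerivAt_log hmem).comp ((t:ℂ)) hinner).comp_ofReal
  simpa [one_div, Function.comp] using this

theorem stieltjes_bounded_of_analytic_density
    (B : Measure ℝ) [IsProbabilityMeasure B] (x : ℝ)
    (δ : ℝ) (hδ : 0 < δ) (f : ℂ → ℂ)
    (hf : AnalyticOn ℂ f (Metric.ball (x : ℂ) δ))
    (hdens : B.restrict (Set.Ioo (x - δ) (x + δ))
      = (MeasureTheory.volume.withDensity fun t : ℝ =>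
          ENNReal.ofReal (f (t : ℂ)).re).restrict (Set.Ioo (x - δ) (x + δ))) :
    ∃ ε > 0, ∃ C : ℝ, ∀ z : ℂ, 0 < z.im → ‖z - x‖ ≤ ε →
      ‖∫ t : ℝ, 1 / ((t : ℂ) - z) ∂B‖ ≤ C := by
  classical
  set a' : ℝ := x - δ/2 with ha'
  set b' : ℝ := x + δ/2 with hb'
  set I' : Set ℝ := Set.Ioo a' b' with hI'
  have hfa : AnalyticOnNhd ℂ f (Metric.ball (x:ℂ) δ) :=
    (Metric.isOpen_ball.analyticOn_iff_analyticOnNhd).mp hf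
  set cb : Set ℂ := Metric.closedBall (x:ℂ) (δ/2) with hcb
  have hsub : cb ⊆ Metric.ball (x:ℂ) δ := by
    intro w hw
    rw [hcb, Metric.mem_closedBall] at hw
    rw [Metric.mem_ball]; linarith
  have hcompact : IsCompact cb := isCompact_closedBall _ _
  obtain ⟨M₀, hM₀⟩ := hcompact.exists_bound_of_continuousOn (hfa.continuousOn.mono hsub)
  set M : ℝ := max M₀ 0 with hMdef
  have hM : ∀ w ∈ cb, ‖f w‖ ≤ M := fun w hw => (hM₀ w hw).trans (le_max_left _ _)
  have hMnn : 0 ≤ M := le_max_right _ _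
  obtain ⟨K₀, hK₀⟩ := hcompact.exists_bound_of_continuousOn (hfa.deriv.continuousOn.mono hsub)
  set K : ℝ := max K₀ 0 with hKdef
  have hK : ∀ w ∈ cb, ‖deriv f w‖ ≤ K := fun w hw => (hK₀ w hw).trans (le_max_left _ _)
  have hKnn : 0 ≤ K := le_max_right _ _
  -- f is Lipschitz on cb
  have hlipf : ∀ w₁ ∈ cb, ∀ w₂ ∈ cb, ‖f w₁ - f w₂‖ ≤ K * ‖w₁ - w₂‖ := by
    intro w₁ h₁ w₂ h₂
    refine Convex.norm_image_sub_le_of_norm_hasFDerivWithin_le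
      (f' := fun w => ContinuousLinearMap.smulRight (1 : ℂ →L[ℂ] ℂ) (deriv f w))
      (fun w hw => ?_) (fun w hw => ?_) (convex_closedBall _ _) h₂ h₁
    · exact (hasDerivAt_iff_hasFDerivAt.mp
        (hfa w (hsub hw)).differentiableAt.hasDerivAt).hasFDerivWithinAt
    · calc ‖ContinuousLinearMap.smulRight (1 : ℂ →L[ℂ] ℂ) (deriv f w)‖
          = ‖(1 : ℂ →L[ℂ] ℂ)‖ * ‖deriv f w‖ := ContinuousLinearMap.norm_smulRight_apply _ _
        _ ≤ 1 * K := by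
            refine mul_le_mul (ContinuousLinearMap.norm_id_le) (hK w hw) (norm_nonneg _) zero_le_one
        _ = K := one_mul K
  set g : ℝ → ℝ := fun t => max ((f (t:ℂ)).re) 0 with hg
  have hmem_cb : ∀ t : ℝ, |t - x| ≤ δ/2 → (t:ℂ) ∈ cb := by
    intro t ht
    rw [hcb, Metric.mem_closedBall, Complex.dist_eq, ← Complex.ofReal_sub, Complex.norm_real, Real.norm_eq_abs]
    exact ht
  have hglip : ∀ s t : ℝ, |s - x| ≤ δ/2 → |t - x| ≤ δ/2 → |g s - g t| ≤ K * |s - t| := by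
    intro s t hs ht
    refine le_trans (abs_max_sub_max_le_abs _ _ _) ?_
    have h1 : |(f (s:ℂ)).re - (f (t:ℂ)).re| ≤ ‖f (s:ℂ) - f (t:ℂ)‖ := by
      rw [← Complex.sub_re]; exact Complex.abs_re_le_norm _
    refine le_trans h1 ?_
    have h2 := hlipf _ (hmem_cb s hs) _ (hmem_cb t ht)
    rw [← Complex.ofReal_sub,
      Complex.norm_real, Real.norm_eq_abs] at h2
    exact h2
  have hgbd : ∀ t : ℝ, |t - x| ≤ δ/2 → |g t| ≤ M := by
    intro t ht
    have h0 : (0:ℝ) ≤ g t := le_max_right _ _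
    rw [_root_.abs_of_nonneg h0]
    refine max_le ?_ hMnn
    exact le_trans (le_trans (le_abs_self _) (Complex.abs_re_le_norm _)) (hM _ (hmem_cb t ht))
  set Rlog : ℝ := |Real.log (δ/4)| + |Real.log (3*δ/4)| with hRlog
  refine ⟨δ/4, by positivity, 4/δ + K*δ + M * (2*(Rlog + Real.pi)), ?_⟩
  intro z hz hzx
  have hre : |z.re - x| ≤ δ/4 := by
    have h1 : |(z - (x:ℂ)).re| ≤ ‖z - (x:ℂ)‖ := Complex.abs_re_le_norm _
    simp only [Complex.sub_re, Complex.ofReal_re] at h1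
    linarith
  set h : ℝ → ℂ := fun t => 1 / ((t:ℂ) - z) with hh
  have hne : ∀ t : ℝ, (t:ℂ) - z ≠ 0 := by
    intro t hE
    have h2 : ((t:ℂ) - z).im = 0 := by rw [hE]; simp
    simp only [Complex.sub_im, Complex.ofReal_im, zero_sub, neg_eq_zero] at h2
    exact ne_of_gt hz h2
  have habs_pos : ∀ t : ℝ, 0 < ‖(t:ℂ) - z‖ := by
    intro t
    exact norm_pos_iff.mpr (hne t)
  have hnorm_h : ∀ t : ℝ, ‖h t‖ = (‖(t:ℂ) - z‖)⁻¹ := by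
    intro t
    rw [hh]
    simp only [one_div, norm_inv]
  have hconth : Continuous h := by
    apply Continuous.div continuous_const (by continuity)
    exact fun t => hne t
  have hInt : Integrable h B := by
    refine Integrable.mono' (integrable_const (z.im)⁻¹) hconth.aestronglyMeasurable ?_
    filter_upwards with t
    rw [hnorm_h]
    refine inv_anti₀ hz ?_
    have h1 := Complex.abs_im_le_norm ((t:ℂ) - z)
    simp only [Complex.sub_im, Complex.ofReal_im, zero_sub, abs_neg] at h1
    calc z.im ≤ |z.im| := le_abs_self _
      _ ≤ _ := h1
  have hsplit : (∫ t, h t ∂B) = (∫ t in I', h t ∂B) + ∫ t in I'ᶜ, h t ∂B :=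
    (integral_add_compl measurableSet_Ioo hInt).symm
  -- far bound
  have hfar : ‖∫ t in I'ᶜ, h t ∂B‖ ≤ 4/δ := by
    have hb : ∀ t ∈ I'ᶜ, ‖h t‖ ≤ 4/δ := by
      intro t ht
      have htx : δ/2 ≤ |t - x| := by
        rw [Set.mem_compl_iff, hI', Set.mem_Ioo, not_and_or] at ht
        rcases ht with hc | hc
        · push_neg at hc
          rw [abs_sub_comm]
          calc δ/2 ≤ x - t := by rw [ha'] at hc; linarith
            _ ≤ |x - t| := le_abs_self _
        · push_neg at hc
          calc δ/2 ≤ t - x := by rw [hb'] at hc; linarith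
            _ ≤ |t - x| := le_abs_self _
      have h2 : δ/4 ≤ |t - z.re| := by
        have h3 : |t - x| ≤ |t - z.re| + |z.re - x| := by
          calc |t - x| = |(t - z.re) + (z.re - x)| := by ring_nf
            _ ≤ _ := abs_add_le _ _
        linarith
      have h4 : |t - z.re| ≤ ‖(t:ℂ) - z‖ := by
        have := Complex.abs_re_le_norm ((t:ℂ) - z)
        simpa using this
      rw [hnorm_h]
      rw [show (4:ℝ)/δ = (δ/4)⁻¹ by field_simp]
      exact inv_anti₀ (by positivity) (le_trans h2 h4)
    have := norm_setIntegral_le_of_norm_le_const (measure_lt_top B I'ᶜ)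
      hb
    refine le_trans this ?_
    have h1 : (B I'ᶜ).toReal ≤ 1 := by
      refine ENNReal.toReal_le_of_le_ofReal zero_le_one ?_
      simpa using prob_le_one (μ := B) (s := I'ᶜ)
    calc 4/δ * (B I'ᶜ).toReal ≤ 4/δ * 1 := by
          refine mul_le_mul_of_nonneg_left h1 (by positivity)
      _ = 4/δ := mul_one _
  -- near part
  have hsubI : I' ⊆ Set.Ioo (x - δ) (x + δ) :=
    Set.Ioo_subset_Ioo (by rw [ha']; linarith) (by rw [hb']; linarith)
  have hrestr : B.restrict I' = (volume.restrict I').withDensity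
      (fun t : ℝ => ((f (t:ℂ)).re.toNNReal : ENNReal)) := by
    have h1 : B.restrict I' = (B.restrict (Set.Ioo (x - δ) (x + δ))).restrict I' :=
      (Measure.restrict_restrict_of_subset hsubI).symm
    rw [h1, hdens, Measure.restrict_restrict_of_subset hsubI,
      restrict_withDensity measurableSet_Ioo]
    rfl
  have hmapsto : ∀ t : ℝ, t ∈ I' → (t:ℂ) ∈ Metric.ball (x:ℂ) δ := by
    intro t ht
    rw [hI', Set.mem_Ioo, ha', hb'] at ht
    rw [Metric.mem_ball, Complex.dist_eq, ← Complex.ofReal_sub, Complex.norm_real, Real.norm_eq_abs]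
    rw [abs_lt]
    exact ⟨by linarith [ht.1], by linarith [ht.2]⟩
  have hcf : ContinuousOn (fun t : ℝ => f (t:ℂ)) I' :=
    hfa.continuousOn.comp Complex.continuous_ofReal.continuousOn hmapsto
  have hw_meas : AEMeasurable (fun t : ℝ => (f (t:ℂ)).re.toNNReal) (volume.restrict I') := by
    have : ContinuousOn (fun t : ℝ => (f (t:ℂ)).re.toNNReal) I' :=
      (continuous_real_toNNReal.comp Complex.continuous_re).comp_continuousOn hcf
    exact this.aemeasurable measurableSet_Ioo
  have hnear_eq : (∫ t in I', h t ∂B) = ∫ t in I', g t • h t ∂volume := by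
    calc (∫ t in I', h t ∂B)
        = ∫ t, h t ∂((volume.restrict I').withDensity
            (fun t : ℝ => ((f (t:ℂ)).re.toNNReal : ENNReal))) := by rw [← hrestr]
      _ = ∫ t, (f (t:ℂ)).re.toNNReal • h t ∂(volume.restrict I') :=
          integral_withDensity_eq_integral_smul₀ hw_meas h
      _ = ∫ t in I', g t • h t ∂volume := by
          refine integral_congr_ae (Filter.Eventually.of_forall fun t => ?_)
          show (f (t:ℂ)).re.toNNReal • h t = g t • h t
          rw [NNReal.smul_def, Real.coe_toNNReal']
  set c : ℝ := g z.re with hc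
  have hznear : |z.re - x| ≤ δ/2 := le_trans hre (by linarith)
  have hcbd : |c| ≤ M := hgbd z.re hznear
  -- integrability on Icc
  have hmapsto' : ∀ t : ℝ, t ∈ Set.Icc a' b' → (t:ℂ) ∈ Metric.ball (x:ℂ) δ := by
    intro t ht
    rw [Set.mem_Icc, ha', hb'] at ht
    rw [Metric.mem_ball, Complex.dist_eq, ← Complex.ofReal_sub, Complex.norm_real, Real.norm_eq_abs]
    rw [abs_lt]
    exact ⟨by linarith [ht.1], by linarith [ht.2]⟩
  have hcontf' : ContinuousOn (fun t : ℝ => f (t:ℂ)) (Set.Icc a' b') :=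
    hfa.continuousOn.comp Complex.continuous_ofReal.continuousOn hmapsto'
  have hcontg : ContinuousOn g (Set.Icc a' b') :=
    (Complex.continuous_re.comp_continuousOn hcontf').sup continuousOn_const
  have hint1 : IntegrableOn (fun t => (g t - c) • h t) I' volume := by
    refine IntegrableOn.mono_set ?_ Set.Ioo_subset_Icc_self
    exact ((hcontg.sub continuousOn_const).smul hconth.continuousOn).integrableOn_compact
      isCompact_Icc
  have hint2 : IntegrableOn (fun t => c • h t) I' volume := by
    refine IntegrableOn.mono_set ?_ Set.Ioo_subset_Icc_self
    exact (hconth.continuousOn.const_smul c).integrableOn_compact isCompact_Icc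
  have hnear_split : (∫ t in I', g t • h t ∂volume)
      = (∫ t in I', (g t - c) • h t ∂volume) + ∫ t in I', c • h t ∂volume := by
    rw [← integral_add hint1 hint2]
    refine integral_congr_ae (Filter.Eventually.of_forall fun t => ?_)
    show g t • h t = (g t - c) • h t + c • h t
    rw [← add_smul, sub_add_cancel]
  -- term 1
  have hterm1 : ‖∫ t in I', (g t - c) • h t ∂volume‖ ≤ K * δ := by
    have hb : ∀ t ∈ I', ‖(g t - c) • h t‖ ≤ K := by
      intro t ht
      rw [hI', Set.mem_Ioo, ha', hb'] at ht
      have htx : |t - x| ≤ δ/2 := by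
        rw [abs_le]; exact ⟨by linarith [ht.1], by linarith [ht.2]⟩
      have hlg : |g t - c| ≤ K * |t - z.re| := hglip t z.re htx hznear
      have h4 : |t - z.re| ≤ ‖(t:ℂ) - z‖ := by
        have := Complex.abs_re_le_norm ((t:ℂ) - z)
        simpa using this
      rw [norm_smul, hnorm_h, Real.norm_eq_abs]
      calc |g t - c| * (‖(t:ℂ) - z‖)⁻¹
          ≤ (K * ‖(t:ℂ) - z‖) * (‖(t:ℂ) - z‖)⁻¹ := by
            refine mul_le_mul_of_nonneg_right ?_ (by positivity)
            exact le_trans hlg (mul_le_mul_of_nonneg_left h4 hKnn)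
        _ = K := mul_inv_cancel_right₀ (ne_of_gt (habs_pos t)) K
    have := norm_setIntegral_le_of_norm_le_const (show volume I' < ⊤ from measure_Ioo_lt_top) hb
    refine le_trans this ?_
    rw [measureReal_def, hI', Real.volume_Ioo, ENNReal.toReal_ofReal (by rw [ha', hb']; linarith)]
    have : b' - a' = δ := by rw [ha', hb']; ring
    rw [this]
  -- term 2
  have hterm2 : ‖∫ t in I', c • h t ∂volume‖ ≤ M * (2*(Rlog + Real.pi)) := by
    have heq : (∫ t in I', c • h t ∂volume)
        = c • (Complex.log ((b':ℂ) - z) - Complex.log ((a':ℂ) - z)) := by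
      rw [integral_smul, hh, hI', aux_integral_inv z hz a' b' (by rw [ha', hb']; linarith)]
    rw [heq]
    have hlogbd : ∀ w : ℂ, δ/4 ≤ ‖w‖ → ‖w‖ ≤ 3*δ/4 →
        ‖Complex.log w‖ ≤ Rlog + Real.pi := by
      intro w hw1 hw2
      refine le_trans (aux_abs_log_le w) ?_
      have := aux_log_abs_bound (by positivity : (0:ℝ) < δ/4) hw1 hw2
      rw [hRlog]; linarith
    have key : ∀ d : ℝ, |d - x| = δ/2 → ‖(d:ℂ) - z‖ ≤ 3*δ/4 ∧
        δ/4 ≤ ‖(d:ℂ) - z‖ := by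
      intro d hd
      constructor
      · calc ‖(d:ℂ) - z‖
            = ‖((d:ℂ) - (x:ℂ)) + ((x:ℂ) - z)‖ := by ring_nf
          _ ≤ ‖(d:ℂ) - (x:ℂ)‖ + ‖(x:ℂ) - z‖ := by
              exact norm_add_le _ _
          _ ≤ δ/2 + δ/4 := by
              refine add_le_add ?_ ?_
              · rw [← Complex.ofReal_sub, Complex.norm_real, Real.norm_eq_abs, hd]
              · rw [norm_sub_rev]; exact hzx
          _ = 3*δ/4 := by ring
      · have h1 : |d - z.re| ≤ ‖(d:ℂ) - z‖ := by
          have := Complex.abs_re_le_norm ((d:ℂ) - z)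
          simpa using this
        have h2 : δ/4 ≤ |d - z.re| := by
          have h3 : |d - x| ≤ |d - z.re| + |z.re - x| := by
            calc |d - x| = |(d - z.re) + (z.re - x)| := by ring_nf
              _ ≤ _ := abs_add_le _ _
          rw [hd] at h3; linarith
        linarith
    have hbb := key b' (by rw [hb']; rw [show x + δ/2 - x = δ/2 by ring]; rw [abs_of_pos (by positivity)])
    have haa := key a' (by rw [ha']; rw [show x - δ/2 - x = -(δ/2) by ring, abs_neg]; rw [abs_of_pos (by positivity)])
    rw [norm_smul, Real.norm_eq_abs]
    calc |c| * ‖Complex.log ((b':ℂ) - z) - Complex.log ((a':ℂ) - z)‖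
        ≤ M * ((Rlog + Real.pi) + (Rlog + Real.pi)) := by
          refine mul_le_mul hcbd ?_ (norm_nonneg _) hMnn
          refine le_trans (norm_sub_le _ _) ?_
          exact add_le_add (hlogbd _ hbb.2 hbb.1) (hlogbd _ haa.2 haa.1)
      _ = M * (2*(Rlog + Real.pi)) := by ring
  -- combine
  have hnear : ‖∫ t in I', h t ∂B‖ ≤ K*δ + M * (2*(Rlog + Real.pi)) := by
    rw [hnear_eq, hnear_split]
    exact le_trans (norm_add_le _ _) (add_le_add hterm1 hterm2)
  calc ‖∫ t : ℝ, 1 / ((t : ℂ) - z) ∂B‖ = ‖∫ t, h t ∂B‖ := by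
        rfl
    _ ≤ ‖∫ t in I', h t ∂B‖ + ‖∫ t in I'ᶜ, h t ∂B‖ := by
        rw [hsplit]; exact norm_add_le _ _
    _ ≤ (K*δ + M * (2*(Rlog + Real.pi))) + 4/δ := add_le_add hnear hfar
    _ = 4/δ + K*δ + M * (2*(Rlog + Real.pi)) := by ring
end

section
/- Let A, B be probability measures, γ > 0, h₁ < h₂ real numbers with h₁, h₂ ∉ supp(B), m_B(h_i) = ∫ 1/(τ - h_i) dB(τ), and -1/m_B(h_i) ∉ supp(A) whenever m_B(h_i) ≠ 0. Define x(h) = h + γ ∫ u/(1 + u m_B(h)) dA(u) and x'(h) = 1 - γ ∫ u²/(1+u m_B(h))² dA(u) · ∫ 1/(τ - h)² dB(τ). If x'(h₁) > 0 and x'(h₂) > 0, then x(h₁) < x(h₂). -/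
open MeasureTheory

/-- The support of a measure on `ℝ`: points all of whose open neighborhoods have
positive measure. -/
def measSupport (μ : Measure ℝ) : Set ℝ :=
  {y | ∀ U : Set ℝ, y ∈ U → IsOpen U → 0 < μ U}

/-- If a point is not in the support, then a.e. points stay a positive distance away. -/
lemma ae_dist_of_not_mem_measSupport {μ : Measure ℝ} {h : ℝ} (hh : h ∉ measSupport μ) :
    ∃ ε > 0, ∀ᵐ τ ∂μ, ε ≤ |τ - h| := by
  simp only [measSupport, Set.mem_setOf_eq, not_forall] at hh
  obtain ⟨U, hU, hUo, hU0⟩ := hh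
  push_neg at hU0
  have hU0' : μ U = 0 := le_antisymm hU0 zero_le
  obtain ⟨ε, hε, hball⟩ := Metric.isOpen_iff.1 hUo h hU
  refine ⟨ε, hε, ?_⟩
  have hb0 : μ (Metric.ball h ε) = 0 := measure_mono_null hball hU0'
  have : ∀ᵐ τ ∂μ, τ ∉ Metric.ball h ε := by
    rw [ae_iff]
    simp only [not_not, Set.setOf_mem_eq]; exact hb0
  filter_upwards [this] with τ hτ
  simp only [Metric.mem_ball, Real.dist_eq, not_lt] at hτ
  exact hτ

/-- Cauchy–Schwarz for integrals. -/
lemma integral_mul_sq_le {μ : Measure ℝ} {f g : ℝ → ℝ}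
    (hf : Integrable (fun u => f u ^ 2) μ) (hg : Integrable (fun u => g u ^ 2) μ)
    (hfg : Integrable (fun u => f u * g u) μ) :
    (∫ u, f u * g u ∂μ) ^ 2 ≤ (∫ u, f u ^ 2 ∂μ) * ∫ u, g u ^ 2 ∂μ := by
  set a := ∫ u, f u ^ 2 ∂μ with ha
  set d := ∫ u, f u * g u ∂μ with hd
  set c := ∫ u, g u ^ 2 ∂μ with hc
  have key : ∀ t : ℝ, 0 ≤ a * (t * t) + (2 * d) * t + c := by
    intro t
    have i1 : Integrable (fun u => t ^ 2 * f u ^ 2) μ := hf.const_mul _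
    have i2 : Integrable (fun u => 2 * t * (f u * g u)) μ := hfg.const_mul _
    have i12 : Integrable (fun u => t ^ 2 * f u ^ 2 + 2 * t * (f u * g u)) μ := i1.add i2
    have h0 : 0 ≤ ∫ u, (t * f u + g u) ^ 2 ∂μ :=
      integral_nonneg fun u => sq_nonneg _
    have hexp : ∫ u, (t * f u + g u) ^ 2 ∂μ = t ^ 2 * a + 2 * t * d + c := by
      calc ∫ u, (t * f u + g u) ^ 2 ∂μ
          = ∫ u, (t ^ 2 * f u ^ 2 + 2 * t * (f u * g u)) + g u ^ 2 ∂μ :=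
            integral_congr_ae (Filter.Eventually.of_forall fun u => by ring)
        _ = (∫ u, t ^ 2 * f u ^ 2 + 2 * t * (f u * g u) ∂μ) + ∫ u, g u ^ 2 ∂μ :=
            integral_add i12 hg
        _ = (∫ u, t ^ 2 * f u ^ 2 ∂μ) + (∫ u, 2 * t * (f u * g u) ∂μ) + c := by
            rw [integral_add i1 i2]
        _ = t ^ 2 * a + 2 * t * d + c := by rw [integral_const_mul, integral_const_mul]
    nlinarith [h0, hexp]
  have hdisc := discrim_le_zero key
  simp only [discrim] at hdisc
  nlinarith [hdisc]

set_option maxHeartbeats 1000000 in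
theorem x_of_h_increasing
    (A B : Measure ℝ) [IsProbabilityMeasure A] [IsProbabilityMeasure B]
    (hmom : Integrable (fun u : ℝ => u ^ 2) A)
    (γ : ℝ) (hγ : 0 < γ) (h₁ h₂ : ℝ) (h12 : h₁ < h₂)
    (hs₁ : h₁ ∉ measSupport B) (hs₂ : h₂ ∉ measSupport B)
    (mB : ℝ → ℝ) (hmB : ∀ h, mB h = ∫ τ : ℝ, 1 / (τ - h) ∂B)
    (hA₁ : mB h₁ ≠ 0 → -(1 / mB h₁) ∉ measSupport A)
    (hA₂ : mB h₂ ≠ 0 → -(1 / mB h₂) ∉ measSupport A)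
    (x x' : ℝ → ℝ)
    (hx : ∀ h, x h = h + γ * ∫ u : ℝ, u / (1 + u * mB h) ∂A)
    (hx' : ∀ h, x' h = 1 - γ * (∫ u : ℝ, u ^ 2 / (1 + u * mB h) ^ 2 ∂A)
        * ∫ τ : ℝ, 1 / (τ - h) ^ 2 ∂B)
    (hp₁ : 0 < x' h₁) (hp₂ : 0 < x' h₂) :
    x h₁ < x h₂ := by
  -- lower bounds on denominators
  obtain ⟨d₁, hd₁, hBd₁⟩ := ae_dist_of_not_mem_measSupport hs₁
  obtain ⟨d₂, hd₂, hBd₂⟩ := ae_dist_of_not_mem_measSupport hs₂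
  have hAden : ∀ (m : ℝ), (m ≠ 0 → -(1 / m) ∉ measSupport A) →
      ∃ c > 0, ∀ᵐ u ∂A, c ≤ |1 + u * m| := by
    intro m hm
    by_cases h0 : m = 0
    · exact ⟨1, one_pos, by simp [h0]⟩
    · obtain ⟨ε, hε, hae⟩ := ae_dist_of_not_mem_measSupport (hm h0)
      refine ⟨|m| * ε, by positivity, ?_⟩
      filter_upwards [hae] with u hu
      have : 1 + u * m = m * (u - -(1 / m)) := by field_simp; ring
      rw [this, abs_mul]
      exact mul_le_mul_of_nonneg_left hu (abs_nonneg m)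
  obtain ⟨c₁, hc₁, hAc₁⟩ := hAden (mB h₁) hA₁
  obtain ⟨c₂, hc₂, hAc₂⟩ := hAden (mB h₂) hA₂
  -- integrability on B side
  have habs : Integrable (fun u : ℝ => |u|) A := by
    refine hmom.add (integrable_const 1) |>.mono' ?_ ?_
    · exact measurable_abs.aestronglyMeasurable
    · filter_upwards with u
      simp only [Real.norm_eq_abs, abs_abs, Pi.add_apply]
      nlinarith [sq_nonneg (|u| - 1), sq_abs u]
  have measB1 : ∀ h : ℝ, AEStronglyMeasurable (fun τ : ℝ => 1 / (τ - h)) B := by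
    intro h
    exact (Measurable.div measurable_const
      (measurable_id.sub measurable_const)).aestronglyMeasurable
  have intB : ∀ (h : ℝ) (d : ℝ), 0 < d → (∀ᵐ τ ∂B, d ≤ |τ - h|) →
      Integrable (fun τ : ℝ => 1 / (τ - h)) B := by
    intro h d hd hae
    refine (integrable_const (1 / d)).mono' (measB1 h) ?_
    filter_upwards [hae] with τ hτ
    rw [norm_div, norm_one, Real.norm_eq_abs]
    exact one_div_le_one_div_of_le hd hτ
  have intB₁ := intB h₁ d₁ hd₁ hBd₁
  have intB₂ := intB h₂ d₂ hd₂ hBd₂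
  have intBprod : ∀ (g g' : ℝ) (d d' : ℝ), 0 < d → 0 < d' →
      (∀ᵐ τ ∂B, d ≤ |τ - g|) → (∀ᵐ τ ∂B, d' ≤ |τ - g'|) →
      Integrable (fun τ : ℝ => 1 / (τ - g) * (1 / (τ - g'))) B := by
    intro g g' d d' hd hd' hae hae'
    refine (integrable_const (1 / d * (1 / d'))).mono' ((measB1 g).mul (measB1 g')) ?_
    filter_upwards [hae, hae'] with τ hτ₁ hτ₂
    rw [norm_mul, norm_div, norm_div, norm_one, Real.norm_eq_abs, Real.norm_eq_abs]
    exact mul_le_mul (one_div_le_one_div_of_le hd hτ₁)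
      (one_div_le_one_div_of_le hd' hτ₂) (by positivity) (by positivity)
  have intBJ := intBprod h₁ h₂ d₁ d₂ hd₁ hd₂ hBd₁ hBd₂
  have intB₁2 := intBprod h₁ h₁ d₁ d₁ hd₁ hd₁ hBd₁ hBd₁
  have intB₂2 := intBprod h₂ h₂ d₂ d₂ hd₂ hd₂ hBd₂ hBd₂
  -- integrability on A side
  have measA1 : ∀ m : ℝ, AEStronglyMeasurable (fun u : ℝ => u / (1 + u * m)) A := by
    intro m
    exact (measurable_id.div
      (measurable_const.add (measurable_id.mul_const m))).aestronglyMeasurable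
  have intA : ∀ (m c : ℝ), 0 < c → (∀ᵐ u ∂A, c ≤ |1 + u * m|) →
      Integrable (fun u : ℝ => u / (1 + u * m)) A := by
    intro m c hc hae
    refine (habs.const_mul (1 / c)).mono' (measA1 m) ?_
    filter_upwards [hae] with u hu
    simp only [Real.norm_eq_abs, abs_div]
    calc |u| / |1 + u * m| ≤ |u| / c :=
          div_le_div_of_nonneg_left (abs_nonneg u) hc hu
      _ = 1 / c * |u| := by ring
  have intA₁ := intA (mB h₁) c₁ hc₁ hAc₁
  have intA₂ := intA (mB h₂) c₂ hc₂ hAc₂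
  have intAprod : ∀ (m m' c c' : ℝ), 0 < c → 0 < c' →
      (∀ᵐ u ∂A, c ≤ |1 + u * m|) → (∀ᵐ u ∂A, c' ≤ |1 + u * m'|) →
      Integrable (fun u : ℝ => u / (1 + u * m) * (u / (1 + u * m'))) A := by
    intro m m' c c' hc hc' hae hae'
    refine (hmom.const_mul (1 / c * (1 / c'))).mono' ((measA1 m).mul (measA1 m')) ?_
    filter_upwards [hae, hae'] with u hu hu'
    simp only [Real.norm_eq_abs, abs_mul, abs_div]
    have h1 : |u| / |1 + u * m| ≤ |u| / c :=
      div_le_div_of_nonneg_left (abs_nonneg u) hc hu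
    have h2 : |u| / |1 + u * m'| ≤ |u| / c' :=
      div_le_div_of_nonneg_left (abs_nonneg u) hc' hu'
    calc |u| / |1 + u * m| * (|u| / |1 + u * m'|) ≤ |u| / c * (|u| / c') :=
          mul_le_mul h1 h2 (by positivity) (by positivity)
      _ = 1 / c * (1 / c') * u ^ 2 := by rw [← sq_abs]; ring
  have intA₁2 := intAprod (mB h₁) (mB h₁) c₁ c₁ hc₁ hc₁ hAc₁ hAc₁
  have intA₂2 := intAprod (mB h₂) (mB h₂) c₂ c₂ hc₂ hc₂ hAc₂ hAc₂
  have intAI := intAprod (mB h₁) (mB h₂) c₁ c₂ hc₁ hc₂ hAc₁ hAc₂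
  -- abbreviations (plain `have`-style definitions)
  set J : ℝ := ∫ τ : ℝ, 1 / (τ - h₁) * (1 / (τ - h₂)) ∂B with hJ
  set I : ℝ := ∫ u : ℝ, u / (1 + u * mB h₁) * (u / (1 + u * mB h₂)) ∂A with hIdef
  -- identity for mB h₂ - mB h₁
  have hmdiff : mB h₂ - mB h₁ = (h₂ - h₁) * J := by
    rw [hmB, hmB, ← integral_sub intB₂ intB₁, hJ, ← integral_const_mul]
    refine integral_congr_ae ?_
    filter_upwards [hBd₁, hBd₂] with τ hτ₁ hτ₂
    have h1 : τ - h₁ ≠ 0 := by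
      intro h; rw [h, abs_zero] at hτ₁; linarith
    have h2 : τ - h₂ ≠ 0 := by
      intro h; rw [h, abs_zero] at hτ₂; linarith
    rw [div_sub_div _ _ h2 h1, one_div_mul_one_div, mul_one_div,
      div_eq_div_iff (mul_ne_zero h2 h1) (mul_ne_zero h1 h2)]
    ring
  -- identity for the A integrals
  have hadiff : (∫ u : ℝ, u / (1 + u * mB h₂) ∂A) - ∫ u : ℝ, u / (1 + u * mB h₁) ∂A
      = -((mB h₂ - mB h₁) * I) := by
    rw [← integral_sub intA₂ intA₁, hIdef, ← integral_const_mul, ← integral_neg]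
    refine integral_congr_ae ?_
    filter_upwards [hAc₁, hAc₂] with u hu₁ hu₂
    have h1 : 1 + u * mB h₁ ≠ 0 := by
      intro h; rw [h, abs_zero] at hu₁; linarith
    have h2 : 1 + u * mB h₂ ≠ 0 := by
      intro h; rw [h, abs_zero] at hu₂; linarith
    show u / (1 + u * mB h₂) - u / (1 + u * mB h₁)
      = -((mB h₂ - mB h₁) * (u / (1 + u * mB h₁) * (u / (1 + u * mB h₂))))
    rw [div_sub_div _ _ h2 h1, div_mul_div_comm, mul_div_assoc', ← neg_div,
      div_eq_div_iff (mul_ne_zero h2 h1) (mul_ne_zero h1 h2)]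
    ring
  -- the difference formula
  have hdiff : x h₂ - x h₁ = (h₂ - h₁) * (1 - γ * I * J) := by
    have h0 : x h₂ - x h₁ = (h₂ - h₁) + γ *
        ((∫ u : ℝ, u / (1 + u * mB h₂) ∂A) - ∫ u : ℝ, u / (1 + u * mB h₁) ∂A) := by
      rw [hx h₁, hx h₂]; ring
    rw [h0, hadiff, hmdiff]; ring
  -- named square integrals
  set I₁ : ℝ := ∫ u : ℝ, u / (1 + u * mB h₁) * (u / (1 + u * mB h₁)) ∂A with hI₁
  set I₂ : ℝ := ∫ u : ℝ, u / (1 + u * mB h₂) * (u / (1 + u * mB h₂)) ∂A with hI₂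
  set J₁ : ℝ := ∫ τ : ℝ, 1 / (τ - h₁) * (1 / (τ - h₁)) ∂B with hJ₁
  set J₂ : ℝ := ∫ τ : ℝ, 1 / (τ - h₂) * (1 / (τ - h₂)) ∂B with hJ₂
  have hI₁0 : 0 ≤ I₁ := integral_nonneg fun u => mul_self_nonneg _
  have hI₂0 : 0 ≤ I₂ := integral_nonneg fun u => mul_self_nonneg _
  have hJ₁0 : 0 ≤ J₁ := integral_nonneg fun τ => mul_self_nonneg _
  have hJ₂0 : 0 ≤ J₂ := integral_nonneg fun τ => mul_self_nonneg _
  -- relation with x'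
  have hxe : ∀ (h : ℝ), (∫ u : ℝ, u ^ 2 / (1 + u * mB h) ^ 2 ∂A)
      = ∫ u : ℝ, u / (1 + u * mB h) * (u / (1 + u * mB h)) ∂A := by
    intro h
    refine integral_congr_ae (Filter.Eventually.of_forall fun u => ?_)
    show u ^ 2 / (1 + u * mB h) ^ 2 = u / (1 + u * mB h) * (u / (1 + u * mB h))
    rw [div_mul_div_comm, ← pow_two, ← pow_two]
  have hBe : ∀ (h : ℝ), (∫ τ : ℝ, 1 / (τ - h) ^ 2 ∂B)
      = ∫ τ : ℝ, 1 / (τ - h) * (1 / (τ - h)) ∂B := by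
    intro h
    refine integral_congr_ae (Filter.Eventually.of_forall fun τ => ?_)
    show 1 / (τ - h) ^ 2 = 1 / (τ - h) * (1 / (τ - h))
    rw [div_mul_div_comm, one_mul, ← pow_two]
  have hs₁' : γ * I₁ * J₁ < 1 := by
    have e₁ : x' h₁ = 1 - γ * I₁ * J₁ := by
      rw [hx' h₁, hxe h₁, hBe h₁, ← hI₁, ← hJ₁]
    linarith [hp₁, e₁.le, e₁.ge]
  have hs₂' : γ * I₂ * J₂ < 1 := by
    have e₂ : x' h₂ = 1 - γ * I₂ * J₂ := by
      rw [hx' h₂, hxe h₂, hBe h₂, ← hI₂, ← hJ₂]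
    linarith [hp₂, e₂.le, e₂.ge]
  -- Cauchy–Schwarz
  have hcsI : I ^ 2 ≤ I₁ * I₂ := by
    rw [hIdef, hI₁, hI₂, ← hxe h₁, ← hxe h₂]
    have := integral_mul_sq_le (f := fun u => u / (1 + u * mB h₁))
      (g := fun u => u / (1 + u * mB h₂)) (μ := A)
      (by rw [show (fun u : ℝ => (u / (1 + u * mB h₁)) ^ 2)
            = fun u : ℝ => u / (1 + u * mB h₁) * (u / (1 + u * mB h₁)) from
            funext fun u => by show (u / (1 + u * mB h₁)) ^ 2 = _; rw [pow_two]]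
          exact intA₁2)
      (by rw [show (fun u : ℝ => (u / (1 + u * mB h₂)) ^ 2)
            = fun u : ℝ => u / (1 + u * mB h₂) * (u / (1 + u * mB h₂)) from
            funext fun u => by show (u / (1 + u * mB h₂)) ^ 2 = _; rw [pow_two]]
          exact intA₂2) intAI
    calc (∫ u : ℝ, u / (1 + u * mB h₁) * (u / (1 + u * mB h₂)) ∂A) ^ 2
        ≤ (∫ u : ℝ, (u / (1 + u * mB h₁)) ^ 2 ∂A) *
            ∫ u : ℝ, (u / (1 + u * mB h₂)) ^ 2 ∂A := this
      _ = (∫ u : ℝ, u ^ 2 / (1 + u * mB h₁) ^ 2 ∂A) *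
            ∫ u : ℝ, u ^ 2 / (1 + u * mB h₂) ^ 2 ∂A := by
          congr 1
          · exact integral_congr_ae (Filter.Eventually.of_forall fun u => by
              show (u / (1 + u * mB h₁)) ^ 2 = u ^ 2 / (1 + u * mB h₁) ^ 2; rw [div_pow])
          · exact integral_congr_ae (Filter.Eventually.of_forall fun u => by
              show (u / (1 + u * mB h₂)) ^ 2 = u ^ 2 / (1 + u * mB h₂) ^ 2; rw [div_pow])
  have hcsJ : J ^ 2 ≤ J₁ * J₂ := by
    rw [hJ, hJ₁, hJ₂, ← hBe h₁, ← hBe h₂]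
    have := integral_mul_sq_le (f := fun τ => 1 / (τ - h₁))
      (g := fun τ => 1 / (τ - h₂)) (μ := B)
      (by rw [show (fun τ : ℝ => (1 / (τ - h₁)) ^ 2)
            = fun τ : ℝ => 1 / (τ - h₁) * (1 / (τ - h₁)) from
            funext fun τ => by show (1 / (τ - h₁)) ^ 2 = _; rw [pow_two]]
          exact intB₁2)
      (by rw [show (fun τ : ℝ => (1 / (τ - h₂)) ^ 2)
            = fun τ : ℝ => 1 / (τ - h₂) * (1 / (τ - h₂)) from
            funext fun τ => by show (1 / (τ - h₂)) ^ 2 = _; rw [pow_two]]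
          exact intB₂2) intBJ
    calc (∫ τ : ℝ, 1 / (τ - h₁) * (1 / (τ - h₂)) ∂B) ^ 2
        ≤ (∫ τ : ℝ, (1 / (τ - h₁)) ^ 2 ∂B) * ∫ τ : ℝ, (1 / (τ - h₂)) ^ 2 ∂B := this
      _ = (∫ τ : ℝ, 1 / (τ - h₁) ^ 2 ∂B) * ∫ τ : ℝ, 1 / (τ - h₂) ^ 2 ∂B := by
          congr 1
          · exact integral_congr_ae (Filter.Eventually.of_forall fun τ => by
              show (1 / (τ - h₁)) ^ 2 = 1 / (τ - h₁) ^ 2; rw [div_pow, one_pow])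
          · exact integral_congr_ae (Filter.Eventually.of_forall fun τ => by
              show (1 / (τ - h₂)) ^ 2 = 1 / (τ - h₂) ^ 2; rw [div_pow, one_pow])
  -- conclude
  have hkey : γ * I * J < 1 := by
    have h1 : (γ * I * J) ^ 2 ≤ (γ * I₁ * J₁) * (γ * I₂ * J₂) := by
      have hIJ : I ^ 2 * J ^ 2 ≤ (I₁ * I₂) * (J₁ * J₂) :=
        mul_le_mul hcsI hcsJ (sq_nonneg J) (mul_nonneg hI₁0 hI₂0)
      calc (γ * I * J) ^ 2 = γ ^ 2 * (I ^ 2 * J ^ 2) := by ring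
        _ ≤ γ ^ 2 * ((I₁ * I₂) * (J₁ * J₂)) :=
            mul_le_mul_of_nonneg_left hIJ (sq_nonneg γ)
        _ = (γ * I₁ * J₁) * (γ * I₂ * J₂) := by ring
    have h2 : (γ * I₁ * J₁) * (γ * I₂ * J₂) < 1 := by
      have n1 : 0 ≤ γ * I₁ * J₁ := by positivity
      have n2 : 0 ≤ γ * I₂ * J₂ := by positivity
      nlinarith [hs₁', hs₂', n1, n2]
    nlinarith [h1, h2, sq_nonneg (γ * I * J - 1)]
  have hpos : 0 < (h₂ - h₁) * (1 - γ * I * J) :=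
    mul_pos (by linarith) (by linarith)
  linarith [hdiff, hpos]
end

section
/- Let F be a probability distribution function on ℝ and x ∈ ℝ, and suppose L = lim_{z ∈ ℂ⁺ → x} Im m_F(z) exists, where m_F is the Stieltjes transform of F. Then F is differentiable at x with F'(x) = L/π. -/
open MeasureTheory Filter ProbabilityTheory Set Real

-- integrability of the Stieltjes kernel
lemma sc_integrable (μ : Measure ℝ) [IsProbabilityMeasure μ] (z : ℂ) (hz : 0 < z.im) :
    Integrable (fun t : ℝ => 1 / ((t : ℂ) - z)) μ := by
  have hne : ∀ t : ℝ, (t : ℂ) - z ≠ 0 := by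
    intro t h
    have : ((t : ℂ) - z).im = 0 := by rw [h]; simp
    simp only [Complex.sub_im, Complex.ofReal_im, zero_sub, neg_eq_zero] at this
    exact hz.ne' this
  refine (integrable_const (1 / z.im)).mono' ?_ ?_
  · exact (Continuous.div continuous_const
      ((Complex.continuous_ofReal).sub continuous_const) hne).aestronglyMeasurable
  · refine Eventually.of_forall fun t => ?_
    rw [norm_div, norm_one]
    have h1 : z.im ≤ ‖(t : ℂ) - z‖ := by
      have := Complex.abs_im_le_norm ((t : ℂ) - z)
      simp only [Complex.sub_im, Complex.ofReal_im, zero_sub, abs_neg] at this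
      calc z.im ≤ |z.im| := le_abs_self _
        _ ≤ ‖(t:ℂ) - z‖ := this
    exact one_div_le_one_div_of_le hz h1

-- imaginary part is the Poisson integral
lemma sc_im_eq (μ : Measure ℝ) [IsProbabilityMeasure μ] (z : ℂ) (hz : 0 < z.im) :
    (∫ t : ℝ, 1 / ((t : ℂ) - z) ∂μ).im
      = ∫ t : ℝ, z.im / ((t - z.re) ^ 2 + z.im ^ 2) ∂μ := by
  have him := integral_im (𝕜 := ℂ) (sc_integrable μ z hz)
  rw [show ((∫ t : ℝ, 1 / ((t : ℂ) - z) ∂μ).im)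
      = RCLike.im (K := ℂ) (∫ t : ℝ, 1 / ((t : ℂ) - z) ∂μ) from rfl, ← him]
  apply integral_congr_ae
  refine Eventually.of_forall fun t => ?_
  show (1 / ((t : ℂ) - z)).im = _
  have : (1 / ((t : ℂ) - z)).im = z.im / ((t - z.re) ^ 2 + z.im ^ 2) := by
    rw [one_div, Complex.inv_im, Complex.normSq_apply]
    simp only [Complex.sub_re, Complex.ofReal_re, Complex.sub_im, Complex.ofReal_im, zero_sub]
    ring
  exact this

lemma sc_denom_pos (y : ℝ) (hy : 0 < y) (a : ℝ) : 0 < a ^ 2 + y ^ 2 :=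
  add_pos_of_nonneg_of_pos (sq_nonneg a) (pow_pos hy 2)

lemma sc_kernel_cont (y t : ℝ) (hy : 0 < y) :
    Continuous (fun s : ℝ => y / ((t - s) ^ 2 + y ^ 2)) := by
  apply Continuous.div continuous_const
  · continuity
  · intro s; exact (sc_denom_pos y hy (t - s)).ne'

lemma sc_arctan_integral (y t α β : ℝ) (hy : 0 < y) :
    ∫ s in α..β, y / ((t - s) ^ 2 + y ^ 2)
      = arctan ((β - t) / y) - arctan ((α - t) / y) := by
  have hderiv : ∀ s ∈ uIcc α β, HasDerivAt (fun s : ℝ => arctan ((s - t) / y))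
      (y / ((t - s) ^ 2 + y ^ 2)) s := by
    intro s _
    have h1 : HasDerivAt (fun s : ℝ => (s - t) / y) (1 / y) s := by
      simpa using ((hasDerivAt_id s).sub_const t).div_const y
    have h2 := (Real.hasDerivAt_arctan ((s - t) / y)).comp s h1
    refine h2.congr_deriv ?_
    have h3 : (t - s) ^ 2 = (s - t) ^ 2 := by ring
    field_simp [h3]
    ring
  have hcont : IntervalIntegrable (fun s : ℝ => y / ((t - s) ^ 2 + y ^ 2)) volume α β :=
    (sc_kernel_cont y t hy).intervalIntegrable α β
  exact intervalIntegral.integral_eq_sub_of_hasDerivAt hderiv hcont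

lemma sc_kernel_le (y s t : ℝ) (hy : 0 < y) :
    y / ((t - s) ^ 2 + y ^ 2) ≤ 1 / y := by
  rw [div_le_div_iff₀ (sc_denom_pos y hy (t - s)) hy]
  nlinarith [sq_nonneg (t - s)]

lemma sc_kernel_nonneg (y s t : ℝ) (hy : 0 < y) :
    0 ≤ y / ((t - s) ^ 2 + y ^ 2) :=
  div_nonneg hy.le (sc_denom_pos y hy (t - s)).le

-- Fubini
lemma sc_fubini (μ : Measure ℝ) [IsProbabilityMeasure μ] (y α β : ℝ) (hy : 0 < y)
    (hab : α ≤ β) :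
    (IntervalIntegrable (fun s => ∫ t, y / ((t - s) ^ 2 + y ^ 2) ∂μ) volume α β) ∧
    ∫ s in α..β, ∫ t, y / ((t - s) ^ 2 + y ^ 2) ∂μ
      = ∫ t, (arctan ((β - t) / y) - arctan ((α - t) / y)) ∂μ := by
  set ν : Measure ℝ := volume.restrict (Ioc α β) with hν
  haveI : IsFiniteMeasure ν := by
    constructor
    rw [hν, Measure.restrict_apply_univ, Real.volume_Ioc]
    exact ENNReal.ofReal_lt_top
  have hint : Integrable (Function.uncurry fun s t => y / ((t - s) ^ 2 + y ^ 2)) (ν.prod μ) := by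
    refine (integrable_const (1 / y)).mono' ?_ ?_
    · apply Continuous.aestronglyMeasurable
      apply Continuous.div continuous_const
      · continuity
      · intro p; exact (sc_denom_pos y hy (p.2 - p.1)).ne'
    · refine Eventually.of_forall fun p => ?_
      rw [Function.uncurry_apply_pair, Real.norm_eq_abs,
        abs_of_nonneg (sc_kernel_nonneg y p.1 p.2 hy)]
      exact sc_kernel_le y p.1 p.2 hy
  constructor
  · rw [intervalIntegrable_iff_integrableOn_Ioc_of_le hab]
    exact hint.integral_prod_left
  · rw [intervalIntegral.integral_of_le hab]
    have := MeasureTheory.integral_integral_swap hint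
    rw [show (∫ s in Ioc α β, ∫ t, y / ((t - s) ^ 2 + y ^ 2) ∂μ) =
      ∫ s, ∫ t, y / ((t - s) ^ 2 + y ^ 2) ∂μ ∂ν from rfl, this]
    apply integral_congr_ae
    refine Eventually.of_forall fun t => ?_
    show (∫ s, y / ((t - s) ^ 2 + y ^ 2) ∂ν) = _
    rw [hν, ← intervalIntegral.integral_of_le hab, sc_arctan_integral y t α β hy]

-- limit of arctan(c / u n) as u n → 0+
lemma sc_arctan_lim_pos (c : ℝ) (hc : 0 < c) (u : ℕ → ℝ) (hu : ∀ n, 0 < u n)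
    (hu0 : Tendsto u atTop (nhds 0)) :
    Tendsto (fun n => arctan (c / u n)) atTop (nhds (π / 2)) := by
  have h1 : Tendsto u atTop (nhdsWithin 0 (Ioi 0)) :=
    tendsto_nhdsWithin_of_tendsto_nhds_of_eventually_within u hu0
      (Eventually.of_forall fun n => hu n)
  have h2 : Tendsto (fun n => c / u n) atTop atTop := by
    simp only [div_eq_mul_inv]
    exact (tendsto_inv_nhdsGT_zero.comp h1).const_mul_atTop hc
  exact (Real.tendsto_arctan_atTop.mono_right nhdsWithin_le_nhds).comp h2

lemma sc_arctan_lim_neg (c : ℝ) (hc : c < 0) (u : ℕ → ℝ) (hu : ∀ n, 0 < u n)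
    (hu0 : Tendsto u atTop (nhds 0)) :
    Tendsto (fun n => arctan (c / u n)) atTop (nhds (-(π / 2))) := by
  have h := sc_arctan_lim_pos (-c) (by linarith) u hu hu0
  have : (fun n => arctan (c / u n)) = fun n => -arctan ((-c) / u n) := by
    funext n
    rw [← Real.arctan_neg, neg_div, neg_neg]
  rw [this]
  exact h.neg

noncomputable def scG (α β : ℝ) : ℝ → ℝ := fun t =>
  (Ioo α β).indicator (fun _ => π) t + ({α} : Set ℝ).indicator (fun _ => π / 2) t
    + ({β} : Set ℝ).indicator (fun _ => π / 2) t

lemma sc_pointwise (α β : ℝ) (hαβ : α < β) (t : ℝ) (u : ℕ → ℝ) (hu : ∀ n, 0 < u n)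
    (hu0 : Tendsto u atTop (nhds 0)) :
    Tendsto (fun n => arctan ((β - t) / u n) - arctan ((α - t) / u n)) atTop
      (nhds (scG α β t)) := by
  rcases lt_trichotomy t α with h | h | h
  · have hg : scG α β t = 0 := by
      simp [scG, Set.indicator_apply, h.ne, (h.trans hαβ).ne, Set.mem_Ioo, not_lt.2 h.le]
    rw [hg]
    have := (sc_arctan_lim_pos (β - t) (by linarith) u hu hu0).sub
      (sc_arctan_lim_pos (α - t) (by linarith) u hu hu0)
    simpa using this
  · subst h
    have hg : scG t β t = π / 2 := by
      simp [scG, Set.indicator_apply, hαβ.ne, Set.mem_Ioo, lt_irrefl]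
    rw [hg]
    simp only [sub_self, zero_div, Real.arctan_zero, sub_zero]
    exact sc_arctan_lim_pos (β - t) (by linarith) u hu hu0
  · rcases lt_trichotomy t β with h' | h' | h'
    · have hg : scG α β t = π := by
        simp [scG, Set.indicator_apply, h.ne', h'.ne, Set.mem_Ioo, h, h']
      rw [hg]
      have := (sc_arctan_lim_pos (β - t) (by linarith) u hu hu0).sub
        (sc_arctan_lim_neg (α - t) (by linarith) u hu hu0)
      simpa using this
    · subst h'
      have hg : scG α t t = π / 2 := by
        simp [scG, Set.indicator_apply, hαβ.ne', Set.mem_Ioo, lt_irrefl]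
      rw [hg]
      simp only [sub_self, zero_div, Real.arctan_zero, zero_sub]
      have := (sc_arctan_lim_neg (α - t) (by linarith) u hu hu0).neg
      simpa using this
    · have hg : scG α β t = 0 := by
        simp [scG, Set.indicator_apply, h.ne', h'.ne', Set.mem_Ioo, not_lt.2 h'.le]
      rw [hg]
      have := (sc_arctan_lim_neg (β - t) (by linarith) u hu hu0).sub
        (sc_arctan_lim_neg (α - t) (by linarith) u hu hu0)
      simpa using this

lemma sc_abs_arctan (x : ℝ) : |arctan x| ≤ π / 2 := by
  rw [abs_le]
  exact ⟨(Real.neg_pi_div_two_lt_arctan x).le, (Real.arctan_lt_pi_div_two x).le⟩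

lemma sc_dct (μ : Measure ℝ) [IsProbabilityMeasure μ] (α β : ℝ) (hαβ : α < β)
    (u : ℕ → ℝ) (hu : ∀ n, 0 < u n) (hu0 : Tendsto u atTop (nhds 0)) :
    Tendsto (fun n => ∫ t, (arctan ((β - t) / u n) - arctan ((α - t) / u n)) ∂μ) atTop
      (nhds (∫ t, scG α β t ∂μ)) := by
  apply MeasureTheory.tendsto_integral_of_dominated_convergence (fun _ => π)
  · intro n
    apply Continuous.aestronglyMeasurable
    exact ((Real.continuous_arctan.comp (by continuity)).sub
      (Real.continuous_arctan.comp (by continuity)))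
  · exact integrable_const π
  · intro n
    refine Eventually.of_forall fun t => ?_
    rw [Real.norm_eq_abs]
    calc |arctan ((β - t) / u n) - arctan ((α - t) / u n)|
        ≤ |arctan ((β - t) / u n)| + |arctan ((α - t) / u n)| := abs_sub _ _
      _ ≤ π / 2 + π / 2 := add_le_add (sc_abs_arctan _) (sc_abs_arctan _)
      _ = π := by ring
  · exact Eventually.of_forall fun t => sc_pointwise α β hαβ t u hu hu0

lemma sc_scG_integrable (μ : Measure ℝ) [IsProbabilityMeasure μ] (α β : ℝ) :
    Integrable (scG α β) μ := by
  unfold scG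
  exact (((integrable_const π).indicator measurableSet_Ioo).add
    ((integrable_const (π / 2)).indicator (measurableSet_singleton α))).add
    ((integrable_const (π / 2)).indicator (measurableSet_singleton β))

lemma sc_scG_bounds (μ : Measure ℝ) [IsProbabilityMeasure μ] (α β : ℝ) (hαβ : α < β) :
    π * (μ (Ioo α β)).toReal ≤ ∫ t, scG α β t ∂μ ∧
      ∫ t, scG α β t ∂μ ≤ π * (μ (Icc α β)).toReal := by
  have hup : ∀ t, scG α β t ≤ (Icc α β).indicator (fun _ => π) t := by
    intro t
    by_cases h1 : t ∈ Ioo α β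
    · have hIcc : t ∈ Icc α β := Ioo_subset_Icc_self h1
      have h2 : t ≠ α := ne_of_gt h1.1
      have h3 : t ≠ β := ne_of_lt h1.2
      simp [scG, Set.indicator_apply, h1, hIcc, h2, h3]
    · by_cases h2 : t = α
      · subst h2
        have : t ∈ Icc t β := ⟨le_refl t, hαβ.le⟩
        simp [scG, Set.indicator_apply, h1, this, hαβ.ne]
        linarith [Real.pi_pos]
      · by_cases h3 : t = β
        · subst h3
          have : t ∈ Icc α t := ⟨hαβ.le, le_refl t⟩
          simp [scG, Set.indicator_apply, h1, this, h2]
          linarith [Real.pi_pos]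
        · simp only [scG, Set.indicator_of_notMem h1,
            Set.indicator_of_notMem (by simpa using h2 : t ∉ ({α} : Set ℝ)),
            Set.indicator_of_notMem (by simpa using h3 : t ∉ ({β} : Set ℝ)),
            add_zero, zero_add]
          exact Set.indicator_nonneg (fun _ _ => Real.pi_pos.le) t
  have hlo : ∀ t, (Ioo α β).indicator (fun _ => π) t ≤ scG α β t := by
    intro t
    by_cases h1 : t ∈ Ioo α β
    · have h2 : t ≠ α := ne_of_gt h1.1
      have h3 : t ≠ β := ne_of_lt h1.2
      simp [scG, Set.indicator_apply, h1, h2, h3]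
    · rw [Set.indicator_of_notMem h1]
      have n1 : (0:ℝ) ≤ (Ioo α β).indicator (fun _ => π) t :=
        Set.indicator_nonneg (fun _ _ => Real.pi_pos.le) t
      have n2 : (0:ℝ) ≤ ({α} : Set ℝ).indicator (fun _ => π / 2) t :=
        Set.indicator_nonneg (fun _ _ => by linarith [Real.pi_pos]) t
      have n3 : (0:ℝ) ≤ ({β} : Set ℝ).indicator (fun _ => π / 2) t :=
        Set.indicator_nonneg (fun _ _ => by linarith [Real.pi_pos]) t
      unfold scG
      linarith
  constructor
  · have := integral_mono ((integrable_const π).indicator measurableSet_Ioo)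
      (sc_scG_integrable μ α β) hlo
    rwa [MeasureTheory.integral_indicator_const _ measurableSet_Ioo, smul_eq_mul,
      mul_comm] at this
  · have := integral_mono (sc_scG_integrable μ α β)
      ((integrable_const π).indicator measurableSet_Icc) hup
    rwa [MeasureTheory.integral_indicator_const _ measurableSet_Icc, smul_eq_mul,
      mul_comm] at this

lemma sc_core (μ : Measure ℝ) [IsProbabilityMeasure μ] (x L : ℝ)
    (hlim : Tendsto (fun z : ℂ => (∫ t : ℝ, 1 / ((t : ℂ) - z) ∂μ).im)
      (nhdsWithin (x : ℂ) {z : ℂ | 0 < z.im}) (nhds L))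
    (ε : ℝ) (hε : 0 < ε) :
    ∃ δ > 0, ∀ α β : ℝ, α < β → x - δ < α → β < x + δ →
      (L - ε) * (β - α) ≤ π * (μ (Icc α β)).toReal ∧
        π * (μ (Ioo α β)).toReal ≤ (L + ε) * (β - α) := by
  rw [Metric.tendsto_nhdsWithin_nhds] at hlim
  obtain ⟨δ0, hδ0pos, hδ0⟩ := hlim ε hε
  set δ : ℝ := δ0 / 3 with hδdef
  have hδpos : 0 < δ := by positivity
  refine ⟨δ, hδpos, fun α β hαβ hα hβ => ?_⟩
  set u : ℕ → ℝ := fun n => δ * (1 / (n + 1)) with hudef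
  have hu : ∀ n, 0 < u n := fun n => by positivity
  have hu0 : Tendsto u atTop (nhds 0) := by
    have := tendsto_one_div_add_atTop_nhds_zero_nat.const_mul δ
    simpa [hudef, one_div] using this
  have hule : ∀ n, u n ≤ δ := by
    intro n
    rw [hudef]
    calc δ * (1 / ((n : ℝ) + 1)) ≤ δ * 1 := by
          apply mul_le_mul_of_nonneg_left _ hδpos.le
          rw [div_le_one (by positivity)]
          have : (0:ℝ) ≤ (n:ℝ) := Nat.cast_nonneg n
          linarith
      _ = δ := mul_one δ
  have key : ∀ n, (L - ε) * (β - α)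
        ≤ (∫ t, (arctan ((β - t) / u n) - arctan ((α - t) / u n)) ∂μ) ∧
      (∫ t, (arctan ((β - t) / u n) - arctan ((α - t) / u n)) ∂μ) ≤ (L + ε) * (β - α) := by
    intro n
    obtain ⟨hfi, hfe⟩ := sc_fubini μ (u n) α β (hu n) hαβ.le
    set P : ℝ → ℝ := fun s => ∫ t, u n / ((t - s) ^ 2 + (u n) ^ 2) ∂μ with hPdef
    have hPb : ∀ s ∈ Icc α β, |P s - L| < ε := by
      intro s hs
      set z : ℂ := (s : ℂ) + (u n) * Complex.I with hzdef
      have hzre : z.re = s := by simp [hzdef]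
      have hzim : z.im = u n := by simp [hzdef]
      have hzmem : z ∈ {z : ℂ | 0 < z.im} := by
        simp only [Set.mem_setOf_eq, hzim]; exact hu n
      have hdist : dist z (x : ℂ) < δ0 := by
        have h1 : ‖z - x‖ ≤ |(z - (x:ℂ)).re| + |(z - (x:ℂ)).im| :=
          Complex.norm_le_abs_re_add_abs_im _
        have h2 : (z - (x:ℂ)).re = s - x := by simp [hzre]
        have h3 : (z - (x:ℂ)).im = u n := by simp [hzim]
        have h4 : |s - x| < δ := by
          rw [abs_lt]
          constructor <;> [linarith [hs.1]; linarith [hs.2]]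
        have h5 : |u n| ≤ δ := by rw [abs_of_pos (hu n)]; exact hule n
        rw [Complex.dist_eq]
        calc ‖z - x‖ ≤ |s - x| + |u n| := by rw [← h2, ← h3]; exact h1
          _ < δ + δ := by linarith
          _ < δ0 := by rw [hδdef]; linarith
      have := hδ0 hzmem hdist
      rw [Real.dist_eq] at this
      have heq : (∫ t : ℝ, 1 / ((t : ℂ) - z) ∂μ).im = P s := by
        rw [sc_im_eq μ z (by rw [hzim]; exact hu n), hzre, hzim]
      rwa [heq] at this
    have hlow : ∀ s ∈ Icc α β, L - ε ≤ P s := fun s hs => by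
      have := (abs_lt.1 (hPb s hs)).1; linarith
    have hhigh : ∀ s ∈ Icc α β, P s ≤ L + ε := fun s hs => by
      have := (abs_lt.1 (hPb s hs)).2; linarith
    have hi1 : ∫ s in α..β, (L - ε) ≤ ∫ s in α..β, P s :=
      intervalIntegral.integral_mono_on hαβ.le (intervalIntegrable_const) hfi hlow
    have hi2 : ∫ s in α..β, P s ≤ ∫ s in α..β, (L + ε) :=
      intervalIntegral.integral_mono_on hαβ.le hfi (intervalIntegrable_const) hhigh
    rw [intervalIntegral.integral_const, smul_eq_mul, mul_comm] at hi1 hi2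
    rw [hfe] at hi1 hi2
    exact ⟨hi1, hi2⟩
  have hdct := sc_dct μ α β hαβ u hu hu0
  have hI1 : (L - ε) * (β - α) ≤ ∫ t, scG α β t ∂μ :=
    ge_of_tendsto' hdct fun n => (key n).1
  have hI2 : (∫ t, scG α β t ∂μ) ≤ (L + ε) * (β - α) :=
    le_of_tendsto' hdct fun n => (key n).2
  obtain ⟨hb1, hb2⟩ := sc_scG_bounds μ α β hαβ
  exact ⟨le_trans hI1 hb2, le_trans hb1 hI2⟩

lemma sc_cdf_diff (μ : Measure ℝ) [IsProbabilityMeasure μ] (a b : ℝ) (hab : a ≤ b) :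
    cdf μ b - cdf μ a = (μ (Ioc a b)).toReal := by
  rw [cdf_eq_real, cdf_eq_real, measureReal_def, measureReal_def]
  have hdisj : Disjoint (Iic a) (Ioc a b) := by
    rw [Set.disjoint_left]
    intro t ht ht'
    exact absurd ht'.1 (not_lt.2 (Set.mem_Iic.1 ht))
  have hunion : Iic a ∪ Ioc a b = Iic b := Iic_union_Ioc_eq_Iic hab
  have : μ (Iic b) = μ (Iic a) + μ (Ioc a b) := by
    rw [← hunion, measure_union hdisj measurableSet_Ioc]
  rw [this, ENNReal.toReal_add (measure_ne_top μ _) (measure_ne_top μ _)]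
  ring

lemma sc_Ioc_bounds (μ : Measure ℝ) [IsProbabilityMeasure μ] (x L ε δ : ℝ) (hδ : 0 < δ)
    (hcore : ∀ α β : ℝ, α < β → x - δ < α → β < x + δ →
      (L - ε) * (β - α) ≤ π * (μ (Icc α β)).toReal ∧
        π * (μ (Ioo α β)).toReal ≤ (L + ε) * (β - α)) :
    ∀ a b : ℝ, a < b → x - δ < a → b < x + δ →
      (L - ε) * (b - a) ≤ π * (μ (Ioc a b)).toReal ∧
        π * (μ (Ioc a b)).toReal ≤ (L + ε) * (b - a) := by
  intro a b hab ha hb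
  have hπ := Real.pi_pos
  constructor
  · -- lower bound, shrink from the left
    have hev : ∀ α' ∈ Ioo a b, (L - ε) * (b - α') ≤ π * (μ (Ioc a b)).toReal := by
      intro α' hα'
      have h1 := (hcore α' b hα'.2 (by linarith [hα'.1]) hb).1
      have h2 : μ (Icc α' b) ≤ μ (Ioc a b) := by
        apply measure_mono
        intro t ht
        exact ⟨lt_of_lt_of_le hα'.1 ht.1, ht.2⟩
      have h3 : (μ (Icc α' b)).toReal ≤ (μ (Ioc a b)).toReal :=
        ENNReal.toReal_mono (measure_ne_top μ _) h2
      nlinarith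
    have htend : Tendsto (fun α' => (L - ε) * (b - α')) (nhdsWithin a (Ioi a))
        (nhds ((L - ε) * (b - a))) := by
      apply Tendsto.mono_left _ nhdsWithin_le_nhds
      exact (tendsto_const_nhds.mul (tendsto_const_nhds.sub tendsto_id))
    exact le_of_tendsto htend (Filter.eventually_of_mem
      (Ioo_mem_nhdsGT_of_mem ⟨le_refl a, hab⟩) hev)
  · -- upper bound, expand to the right
    have hev : ∀ β' ∈ Ioo b (x + δ), π * (μ (Ioc a b)).toReal ≤ (L + ε) * (β' - a) := by
      intro β' hβ'
      have h1 := (hcore a β' (hab.trans hβ'.1) ha hβ'.2).2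
      have h2 : μ (Ioc a b) ≤ μ (Ioo a β') := by
        apply measure_mono
        intro t ht
        exact ⟨ht.1, lt_of_le_of_lt ht.2 hβ'.1⟩
      have h3 : (μ (Ioc a b)).toReal ≤ (μ (Ioo a β')).toReal :=
        ENNReal.toReal_mono (measure_ne_top μ _) h2
      nlinarith
    have htend : Tendsto (fun β' => (L + ε) * (β' - a)) (nhdsWithin b (Ioi b))
        (nhds ((L + ε) * (b - a))) := by
      apply Tendsto.mono_left _ nhdsWithin_le_nhds
      exact (tendsto_const_nhds.mul (tendsto_id.sub tendsto_const_nhds))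
    exact ge_of_tendsto htend (Filter.eventually_of_mem
      (Ioo_mem_nhdsGT_of_mem ⟨le_refl b, hb⟩) hev)

theorem silverstein_choi_derivative
    (μ : Measure ℝ) [IsProbabilityMeasure μ] (x : ℝ) (L : ℝ)
    (hlim : Tendsto (fun z : ℂ => (∫ t : ℝ, 1 / ((t : ℂ) - z) ∂μ).im)
      (nhdsWithin (x : ℂ) {z : ℂ | 0 < z.im}) (nhds L)) :
    HasDerivAt (fun s : ℝ => (ProbabilityTheory.cdf μ) s) (L / Real.pi) x := by
  have hπ := Real.pi_pos
  rw [hasDerivAt_iff_tendsto_slope]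
  rw [Metric.tendsto_nhdsWithin_nhds]
  intro ε hε
  set ε' : ℝ := ε * π / 2 with hε'def
  have hε' : 0 < ε' := by positivity
  obtain ⟨δ, hδ, hcore⟩ := sc_core μ x L hlim ε' hε'
  have hIoc := sc_Ioc_bounds μ x L ε' δ hδ hcore
  refine ⟨δ / 2, by positivity, ?_⟩
  intro y hy hdist
  have hyne : y ≠ x := hy
  rw [Real.dist_eq] at hdist
  rw [slope_def_field, Real.dist_eq]
  have hεπ : ε' / π = ε / 2 := by
    rw [hε'def]; field_simp
  rcases lt_or_gt_of_ne hyne with hlt | hgt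
  · -- y < x
    have h1 : x - δ < y := by
      have := (abs_lt.1 hdist).1; linarith
    have h2 : x < x + δ := by linarith
    obtain ⟨hb1, hb2⟩ := hIoc y x hlt h1 h2
    set m : ℝ := (μ (Ioc y x)).toReal with hm
    have hslope : (cdf μ y - cdf μ x) / (y - x) = m / (x - y) := by
      rw [show cdf μ y - cdf μ x = -(cdf μ x - cdf μ y) by ring,
        sc_cdf_diff μ y x hlt.le, ← hm]
      rw [show y - x = -(x - y) by ring, neg_div_neg_eq]
    rw [hslope]
    have hxy : 0 < x - y := by linarith
    have e1 : m / (x - y) ≤ (L + ε') / π := by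
      rw [div_le_div_iff₀ hxy hπ]
      nlinarith
    have e2 : (L - ε') / π ≤ m / (x - y) := by
      rw [div_le_div_iff₀ hπ hxy]
      nlinarith
    have e3 : (L + ε') / π = L / π + ε' / π := by ring
    have e4 : (L - ε') / π = L / π - ε' / π := by ring
    rw [abs_lt]
    constructor <;> [linarith [e2, e4.symm ▸ e2]; linarith [e1]]
  · -- x < y
    have h1 : x - δ < x := by linarith
    have h2 : y < x + δ := by
      have := (abs_lt.1 hdist).2; linarith
    obtain ⟨hb1, hb2⟩ := hIoc x y hgt h1 h2
    set m : ℝ := (μ (Ioc x y)).toReal with hm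
    have hslope : (cdf μ y - cdf μ x) / (y - x) = m / (y - x) := by
      rw [sc_cdf_diff μ x y hgt.le]
    rw [hslope]
    have hxy : 0 < y - x := by linarith
    have e1 : m / (y - x) ≤ (L + ε') / π := by
      rw [div_le_div_iff₀ hxy hπ]
      nlinarith
    have e2 : (L - ε') / π ≤ m / (y - x) := by
      rw [div_le_div_iff₀ hπ hxy]
      nlinarith
    have e3 : (L + ε') / π = L / π + ε' / π := by ring
    have e4 : (L - ε') / π = L / π - ε' / π := by ring
    rw [abs_lt]
    constructor <;> [linarith [e2]; linarith [e1]]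
end

section
/- Let A, B be probability measures, γ > 0, z₁, z₂ ∈ ℂ⁺, and m₁, m₂ ∈ ℂ⁺ with m_i = ∫ dB(τ)/(τ - z_i + γ∫ u/(1+u m_i)dA(u)) for i = 1,2. Define α(z₁,z₂) = ∫ dB(τ)/((τ - z₁ + γ∫u/(1+um₁)dA(u))(τ - z₂ + γ∫u/(1+um₂)dA(u))) and β(z₁,z₂) = γ∫ u²/((1+um₁)(1+um₂)) dA(u). Then m₁ - m₂ = ((z₁ - z₂)·α(z₁,z₂))/(1 - α(z₁,z₂)β(z₁,z₂)), provided α(z₁,z₂)β(z₁,z₂) ≠ 1. -/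
open MeasureTheory Complex

lemma one_add_mul_ne_zero (m : ℂ) (hm : 0 < m.im) (u : ℝ) : (1 : ℂ) + u * m ≠ 0 := by
  intro h
  rcases eq_or_ne u 0 with hu | hu
  · rw [hu] at h; simp at h
  · have him : ((1 : ℂ) + u * m).im = u * m.im := by simp
    rw [h] at him
    exact mul_ne_zero hu (ne_of_gt hm) him.symm

lemma frac_im_nonpos (m : ℂ) (hm : 0 < m.im) (u : ℝ) :
    ((u : ℂ) / (1 + u * m)).im ≤ 0 := by
  rw [Complex.div_im]
  have h1 : ((u : ℂ)).im = 0 := rfl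
  have h2 : ((u : ℂ)).re = u := rfl
  have h3 : ((1 : ℂ) + u * m).im = u * m.im := by simp
  rw [h1, h2, h3, zero_mul, zero_div, zero_sub]
  have hns : 0 ≤ Complex.normSq (1 + u * m) := Complex.normSq_nonneg _
  have : 0 ≤ u * (u * m.im) / Complex.normSq (1 + u * m) := by
    apply div_nonneg _ hns
    have : u * (u * m.im) = u ^ 2 * m.im := by ring
    rw [this]
    exact mul_nonneg (sq_nonneg u) hm.le
  linarith

theorem MP_difference_identity
    (A B : Measure ℝ) [IsProbabilityMeasure A] [IsProbabilityMeasure B]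
    (γ : ℝ) (hγ : 0 < γ) (z₁ z₂ m₁ m₂ : ℂ)
    (hz₁ : 0 < z₁.im) (hz₂ : 0 < z₂.im) (hm₁ : 0 < m₁.im) (hm₂ : 0 < m₂.im)
    (hIntA₁ : Integrable (fun u : ℝ => (u : ℂ) / (1 + u * m₁)) A)
    (hIntA₂ : Integrable (fun u : ℝ => (u : ℂ) / (1 + u * m₂)) A)
    (g₁ g₂ : ℂ)
    (hg₁ : g₁ = γ * ∫ u : ℝ, (u : ℂ) / (1 + u * m₁) ∂A)
    (hg₂ : g₂ = γ * ∫ u : ℝ, (u : ℂ) / (1 + u * m₂) ∂A)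
    (hfix₁ : m₁ = ∫ τ : ℝ, 1 / ((τ : ℂ) - z₁ + g₁) ∂B)
    (hfix₂ : m₂ = ∫ τ : ℝ, 1 / ((τ : ℂ) - z₂ + g₂) ∂B)
    (α β : ℂ)
    (hα : α = ∫ τ : ℝ, 1 / (((τ : ℂ) - z₁ + g₁) * ((τ : ℂ) - z₂ + g₂)) ∂B)
    (hβ : β = γ * ∫ u : ℝ, (u : ℂ) ^ 2 / ((1 + u * m₁) * (1 + u * m₂)) ∂A)
    (hIntα : Integrable (fun τ : ℝ => 1 / (((τ : ℂ) - z₁ + g₁) * ((τ : ℂ) - z₂ + g₂))) B)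
    (hIntβ : Integrable (fun u : ℝ => (u : ℂ) ^ 2 / ((1 + u * m₁) * (1 + u * m₂))) A)
    (hne : α * β ≠ 1) :
    m₁ - m₂ = (z₁ - z₂) * α / (1 - α * β) := by
  -- imaginary parts of g₁, g₂ are nonpositive
  have hgim : ∀ (m : ℂ) (hm : 0 < m.im)
      (hI : Integrable (fun u : ℝ => (u : ℂ) / (1 + u * m)) A),
      (((γ : ℂ)) * ∫ u : ℝ, (u : ℂ) / (1 + u * m) ∂A).im ≤ 0 := by
    intro m hm hI
    have him : ((γ : ℂ) * ∫ u : ℝ, (u : ℂ) / (1 + u * m) ∂A).im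
        = γ * (∫ u : ℝ, (u : ℂ) / (1 + u * m) ∂A).im := by
      simp [Complex.mul_im]
    rw [him]
    have h1 : (∫ u : ℝ, (u : ℂ) / (1 + u * m) ∂A).im
        = ∫ u : ℝ, ((u : ℂ) / (1 + u * m)).im ∂A := (integral_im hI).symm
    rw [h1]
    have h2 : (∫ u : ℝ, ((u : ℂ) / (1 + u * m)).im ∂A) ≤ 0 := by
      apply integral_nonpos
      intro u
      exact frac_im_nonpos m hm u
    exact mul_nonpos_of_nonneg_of_nonpos hγ.le h2
  have hg₁im : g₁.im ≤ 0 := by rw [hg₁]; exact hgim m₁ hm₁ hIntA₁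
  have hg₂im : g₂.im ≤ 0 := by rw [hg₂]; exact hgim m₂ hm₂ hIntA₂
  -- denominators on the B-side never vanish
  have hd₁ : ∀ τ : ℝ, ((τ : ℂ) - z₁ + g₁) ≠ 0 := by
    intro τ h
    have : ((τ : ℂ) - z₁ + g₁).im = -z₁.im + g₁.im := by simp
    rw [h] at this
    simp at this
    linarith
  have hd₂ : ∀ τ : ℝ, ((τ : ℂ) - z₂ + g₂) ≠ 0 := by
    intro τ h
    have : ((τ : ℂ) - z₂ + g₂).im = -z₂.im + g₂.im := by simp
    rw [h] at this
    simp at this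
    linarith
  -- integrability of 1/(τ - zᵢ + gᵢ)
  have hIntd : ∀ (z g : ℂ) (hz : 0 < z.im) (hg : g.im ≤ 0)
      (hd : ∀ τ : ℝ, ((τ : ℂ) - z + g) ≠ 0),
      Integrable (fun τ : ℝ => 1 / ((τ : ℂ) - z + g)) B := by
    intro z g hz hg hd
    have hcont : Continuous (fun τ : ℝ => 1 / ((τ : ℂ) - z + g)) := by
      apply Continuous.div continuous_const
      · exact (Complex.continuous_ofReal.sub continuous_const).add continuous_const
      · exact hd
    apply (integrable_const ((z.im - g.im)⁻¹)).mono' hcont.aestronglyMeasurable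
    filter_upwards with τ
    have him : ((τ : ℂ) - z + g).im = -z.im + g.im := by simp
    have habs : z.im - g.im ≤ ‖(τ : ℂ) - z + g‖ := by
      have := Complex.abs_im_le_norm ((τ : ℂ) - z + g)
      rw [him] at this
      rw [abs_le] at this
      linarith [this.1]
    have hpos : 0 < z.im - g.im := by linarith
    rw [norm_div, norm_one, ← one_div]
    exact one_div_le_one_div_of_le hpos habs
  have hI1 := hIntd z₁ g₁ hz₁ hg₁im hd₁
  have hI2 := hIntd z₂ g₂ hz₂ hg₂im hd₂
  -- B-side identity
  have hBdiff : m₁ - m₂ = ((z₁ - z₂) + (g₂ - g₁)) * α := by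
    rw [hfix₁, hfix₂, ← integral_sub hI1 hI2]
    have heq : (fun τ : ℝ => 1 / ((τ : ℂ) - z₁ + g₁) - 1 / ((τ : ℂ) - z₂ + g₂))
        = fun τ : ℝ => ((z₁ - z₂) + (g₂ - g₁)) *
            (1 / (((τ : ℂ) - z₁ + g₁) * ((τ : ℂ) - z₂ + g₂))) := by
      funext τ
      have h1 := hd₁ τ
      have h2 := hd₂ τ
      field_simp
      ring
    rw [heq, integral_const_mul, ← hα]
  -- A-side identity
  have hAdiff : g₂ - g₁ = (m₁ - m₂) * β := by
    rw [hg₁, hg₂, ← mul_sub, ← integral_sub hIntA₂ hIntA₁]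
    have heq : (fun u : ℝ => (u : ℂ) / (1 + u * m₂) - (u : ℂ) / (1 + u * m₁))
        = fun u : ℝ => (m₁ - m₂) *
            ((u : ℂ) ^ 2 / ((1 + u * m₁) * (1 + u * m₂))) := by
      funext u
      have h1 := one_add_mul_ne_zero m₁ hm₁ u
      have h2 := one_add_mul_ne_zero m₂ hm₂ u
      field_simp
      ring
    rw [heq, integral_const_mul, hβ]
    ring
  have h1 : (1 : ℂ) - α * β ≠ 0 := sub_ne_zero.mpr (fun h => hne h.symm)
  rw [eq_div_iff h1]
  linear_combination hBdiff + α * hAdiff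
end
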